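/- arXiv:2010.14815 — 2 statements merged into one kernel-verified Lean document; each statement's English description precedes it below -/
import Mathlib

section
/- Let T be a finite tree with vertex set V_T, Wiener index W_T and mean first-passage time F̄_T. Then 2·W_T = |V_T|·F̄_T; equivalently, the sum of the first-passage times F_{u→v} over all ordered pairs of distinct vertices (u,v) of T equals 2(|V_T| − 1)·W_T. -/
set_option autoImplicit false

/-- `H` is the matrix of first-passage times (expected hitting times) of the simple
random walk on `G`: `H u v` is the expected number of steps for the walk started at `u`
to first reach `v`. -/
def IsHittingTime {V : Type*} [Fintype V] [DecidableEq V] (G : SimpleGraph V)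
    [DecidableRel G.Adj] (H : V → V → ℝ) : Prop :=
  (∀ v, H v v = 0) ∧
  ∀ u v, u ≠ v →
    (G.degree u : ℝ) * H u v = (G.degree u : ℝ) + ∑ w ∈ G.neighborFinset u, H w v

/-- The Wiener index of `G`: the sum of the shortest-path distances over all
unordered pairs of vertices. -/
noncomputable def wienerIndex {V : Type*} [Fintype V] (G : SimpleGraph V) : ℝ :=
  (∑ u : V, ∑ v : V, (G.dist u v : ℝ)) / 2

open SimpleGraph Finset

section Aux

variable {V : Type*} [Fintype V] [DecidableEq V]
  (G : SimpleGraph V) [DecidableRel G.Adj]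

set_option linter.unusedSectionVars false
set_option linter.unusedVariables false

/-- In a tree, every path realizes the distance. -/
lemma tree_path_length (hG : G.IsTree) {a b : V} (p : G.Walk a b) (hp : p.IsPath) :
    G.dist a b = p.length := by
  obtain ⟨q, hq, hql⟩ := hG.isConnected.exists_path_of_dist a b
  have h2 := hG.IsAcyclic.path_unique ⟨p, hp⟩ ⟨q, hq⟩
  rw [← hql]
  exact congrArg Walk.length (congrArg Subtype.val h2).symm

/-- Distance sum over the neighbors of `u`, target `v ≠ u`. -/
lemma tree_neighbor_dist_sum (hG : G.IsTree) {u v : V} (huv : u ≠ v) :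
    ∑ x ∈ G.neighborFinset u, (G.dist x v : ℝ)
      = (G.degree u : ℝ) * ((G.dist u v : ℝ) + 1) - 2 := by
  obtain ⟨p, hp, hpl⟩ := hG.isConnected.exists_path_of_dist u v
  cases p with
  | nil => exact absurd rfl huv
  | @cons _ x0 _ h q =>
    rw [Walk.cons_isPath_iff] at hp
    have hq : q.IsPath := hp.1
    have hus : u ∉ q.support := hp.2
    have hdx0 : G.dist x0 v = q.length := tree_path_length G hG q hq
    have hd : G.dist u v = q.length + 1 := by
      rw [tree_path_length G hG (Walk.cons h q) ((Walk.cons_isPath_iff _ _).mpr hp),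
        Walk.length_cons]
    have hx0 : x0 ∈ G.neighborFinset u := (G.mem_neighborFinset u x0).mpr h
    have hy : ∀ y ∈ (G.neighborFinset u).erase x0, (G.dist y v : ℝ) = (q.length : ℝ) + 2 := by
      intro y hy
      obtain ⟨hyx0, hyn⟩ := Finset.mem_erase.mp hy
      have hadj : G.Adj y u := ((G.mem_neighborFinset u y).mp hyn).symm
      have hynp : y ∉ (Walk.cons h q).support := by
        intro hmem
        rw [Walk.support_cons, List.mem_cons] at hmem
        rcases hmem with h1 | h2
        · exact G.irrefl (h1 ▸ hadj)
        · -- y in support of q: build path u → y of length ≥ 2, but dist u y = 1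
          have hpath : (Walk.cons h (q.takeUntil y h2)).IsPath := by
            rw [Walk.cons_isPath_iff]
            exact ⟨hq.takeUntil h2, fun hc => hus (q.support_takeUntil_subset h2 hc)⟩
          have := tree_path_length G hG _ hpath
          rw [SimpleGraph.dist_eq_one_iff_adj.mpr hadj.symm] at this
          simp only [Walk.length_cons] at this
          have hlen : (q.takeUntil y h2).length = 0 := by omega
          exact hyx0 ((Walk.eq_of_length_eq_zero hlen).symm)
      have : G.dist y v = q.length + 2 := by
        have := tree_path_length G hG _
          ((Walk.cons_isPath_iff _ _).mpr ⟨(Walk.cons_isPath_iff _ _).mpr hp, hynp⟩ :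
            (Walk.cons hadj (Walk.cons h q)).IsPath)
        simpa using this
      rw [this]; push_cast; ring
    have hdeg : 1 ≤ G.degree u := by
      rw [← G.card_neighborFinset_eq_degree]
      exact Finset.card_pos.mpr ⟨x0, hx0⟩
    rw [← Finset.add_sum_erase _ _ hx0, Finset.sum_congr rfl hy, Finset.sum_const,
      Finset.card_erase_of_mem hx0, G.card_neighborFinset_eq_degree, nsmul_eq_mul, hdx0, hd]
    push_cast [hdeg]
    ring

/-- Sum of distances from neighbors of `u` to `u` itself. -/
lemma neighbor_dist_self_sum (u : V) :
    ∑ x ∈ G.neighborFinset u, (G.dist x u : ℝ) = (G.degree u : ℝ) := by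
  rw [← G.card_neighborFinset_eq_degree]
  rw [Finset.sum_congr rfl (fun x hx => ?_), Finset.sum_const, nsmul_eq_mul, mul_one]
  rw [SimpleGraph.dist_eq_one_iff_adj.mpr ((G.mem_neighborFinset u x).mp hx).symm]
  norm_num

/-- Handshake for trees. -/
lemma tree_handshake (hG : G.IsTree) :
    ∑ w : V, (G.degree w : ℝ) = 2 * ((Fintype.card V : ℝ) - 1) := by
  have h1 := G.sum_degrees_eq_twice_card_edges
  have h2 := hG.card_edgeFinset
  have : (∑ w : V, (G.degree w : ℝ)) = ((∑ w : V, G.degree w : ℕ) : ℝ) := by push_cast; rfl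
  rw [this, h1]
  have : (Fintype.card V : ℝ) = (G.edgeFinset.card : ℝ) + 1 := by exact_mod_cast h2.symm
  rw [this]; push_cast; ring

lemma harmonic_walk_zero (hG : G.IsTree) (g : V → ℝ) (v : V) (hv : g v = 0)
    (heq : ∀ u, u ≠ v → (G.degree u : ℝ) * g u = ∑ w ∈ G.neighborFinset u, g w) :
    ∀ (u : V) (p : G.Walk u v), (∀ x, g x ≤ g u) → g u = 0 := by
  have main : ∀ (n : ℕ) (u : V) (p : G.Walk u v), p.length = n →
      (∀ x, g x ≤ g u) → g u = 0 := by
    intro n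
    induction n with
    | zero => intro u p hl _; rw [Walk.eq_of_length_eq_zero hl]; exact hv
    | succ n ih =>
      intro u p hl hmax
      by_cases huv : u = v
      · rw [huv]; exact hv
      · cases p with
        | nil => exact absurd rfl huv
        | @cons _ b _ h q =>
          have key : ∀ w ∈ G.neighborFinset u, g u - g w = 0 := by
            apply (Finset.sum_eq_zero_iff_of_nonneg ?_).mp
            · rw [Finset.sum_sub_distrib, Finset.sum_const, ← heq u huv,
                G.card_neighborFinset_eq_degree, nsmul_eq_mul, sub_self]
            · intro w _; simp [hmax w]
          have hb : g b = g u := by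
            have := key b ((G.mem_neighborFinset u b).mpr h)
            linarith
          rw [← hb]
          exact ih b q (by simpa using hl) (fun x => hb ▸ hmax x)
  exact fun u p hmax => main p.length u p rfl hmax

lemma harmonic_eq_zero (hG : G.IsTree) (g : V → ℝ) (v : V) (hv : g v = 0)
    (heq : ∀ u, u ≠ v → (G.degree u : ℝ) * g u = ∑ w ∈ G.neighborFinset u, g w) :
    ∀ u, g u = 0 := by
  have hub : ∀ u : V, g u ≤ 0 := by
    obtain ⟨u0, _, hu0⟩ := Finset.exists_max_image Finset.univ g
      (Finset.univ_nonempty_iff.mpr hG.isConnected.nonempty)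
    have h0 : g u0 = 0 := harmonic_walk_zero G hG g v hv heq u0
      (hG.isConnected u0 v).some (fun x => hu0 x (Finset.mem_univ x))
    exact fun u => le_trans (hu0 u (Finset.mem_univ u)) (le_of_eq h0)
  have hlb : ∀ u : V, -g u ≤ 0 := by
    obtain ⟨u0, _, hu0⟩ := Finset.exists_max_image Finset.univ (fun x => -g x)
      (Finset.univ_nonempty_iff.mpr hG.isConnected.nonempty)
    have h0 : -g u0 = 0 := harmonic_walk_zero G hG (fun x => -g x) v (by simp [hv])
      (fun u hu => by
        show (G.degree u : ℝ) * (-g u) = ∑ w ∈ G.neighborFinset u, -g w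
        rw [Finset.sum_neg_distrib, ← heq u hu]; ring)
      u0 (hG.isConnected u0 v).some (fun x => hu0 x (Finset.mem_univ x))
    exact fun u => le_trans (hu0 u (Finset.mem_univ u)) (le_of_eq h0)
  intro u
  have := hub u; have := hlb u; linarith

noncomputable def distSumW (G : SimpleGraph V) [DecidableRel G.Adj] : V → ℝ :=
  fun z => ∑ w : V, (G.degree w : ℝ) * (G.dist z w : ℝ)

noncomputable def hitCand (G : SimpleGraph V) [DecidableRel G.Adj] : V → V → ℝ :=
  fun u v => ((Fintype.card V : ℝ) - 1) * (G.dist u v : ℝ) +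
    (distSumW G v - distSumW G u) / 2

lemma hitCand_self (v : V) : hitCand G v v = 0 := by
  simp [hitCand, SimpleGraph.dist_self]

lemma neighbor_distSumW_sum (hG : G.IsTree) (u : V) :
    ∑ x ∈ G.neighborFinset u, distSumW G x
      = (G.degree u : ℝ) * distSumW G u
        + ((G.degree u : ℝ) - 2) * (2 * ((Fintype.card V : ℝ) - 1) - (G.degree u : ℝ))
        + (G.degree u : ℝ) * (G.degree u : ℝ) := by
  have h1 : ∑ x ∈ G.neighborFinset u, distSumW G x
      = ∑ w : V, (G.degree w : ℝ) * ∑ x ∈ G.neighborFinset u, (G.dist x w : ℝ) := by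
    simp only [distSumW]
    rw [Finset.sum_comm]
    exact Finset.sum_congr rfl (fun w _ => by rw [Finset.mul_sum])
  have h2 : ∑ w ∈ Finset.univ.erase u, (G.degree w : ℝ) * (G.dist u w : ℝ)
      = distSumW G u := by
    rw [distSumW, ← Finset.add_sum_erase _ _ (Finset.mem_univ u),
      SimpleGraph.dist_self]
    push_cast; ring
  have h3 : ∑ w ∈ Finset.univ.erase u, (G.degree w : ℝ)
      = 2 * ((Fintype.card V : ℝ) - 1) - (G.degree u : ℝ) := by
    rw [eq_sub_iff_add_eq, ← tree_handshake G hG,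
      ← Finset.add_sum_erase _ _ (Finset.mem_univ u)]
    ring
  rw [h1, ← Finset.add_sum_erase _ _ (Finset.mem_univ u), neighbor_dist_self_sum,
    Finset.sum_congr rfl (fun w hw => by
      rw [tree_neighbor_dist_sum G hG (Ne.symm (Finset.mem_erase.mp hw).1)])]
  have h4 : ∑ w ∈ Finset.univ.erase u, (G.degree w : ℝ)
        * ((G.degree u : ℝ) * ((G.dist u w : ℝ) + 1) - 2)
      = (G.degree u : ℝ) * ∑ w ∈ Finset.univ.erase u, (G.degree w : ℝ) * (G.dist u w : ℝ)
        + ((G.degree u : ℝ) - 2) * ∑ w ∈ Finset.univ.erase u, (G.degree w : ℝ) := by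
    rw [Finset.mul_sum, Finset.mul_sum, ← Finset.sum_add_distrib]
    exact Finset.sum_congr rfl (fun w _ => by ring)
  rw [h4, h2, h3]
  ring

lemma hitCand_eq (hG : G.IsTree) {u v : V} (huv : u ≠ v) :
    (G.degree u : ℝ) * hitCand G u v
      = (G.degree u : ℝ) + ∑ x ∈ G.neighborFinset u, hitCand G x v := by
  have hsum : ∑ x ∈ G.neighborFinset u, hitCand G x v
      = ((Fintype.card V : ℝ) - 1) * ((G.degree u : ℝ) * ((G.dist u v : ℝ) + 1) - 2)
        + ((G.degree u : ℝ) * distSumW G v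
            - ((G.degree u : ℝ) * distSumW G u
              + ((G.degree u : ℝ) - 2) * (2 * ((Fintype.card V : ℝ) - 1) - (G.degree u : ℝ))
              + (G.degree u : ℝ) * (G.degree u : ℝ))) / 2 := by
    simp only [hitCand]
    rw [Finset.sum_add_distrib, ← Finset.mul_sum, tree_neighbor_dist_sum G hG huv,
      ← Finset.sum_div, Finset.sum_sub_distrib, Finset.sum_const, neighbor_distSumW_sum G hG,
      G.card_neighborFinset_eq_degree, nsmul_eq_mul]
  rw [hsum, hitCand]
  ring

lemma hitting_eq_hitCand (hG : G.IsTree) (H : V → V → ℝ) (hH : IsHittingTime G H) :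
    ∀ u v, H u v = hitCand G u v := by
  intro u v
  have h0 := harmonic_eq_zero G hG (fun x => H x v - hitCand G x v) v
    (by simp only [hH.1 v, hitCand_self, sub_zero])
    (fun u hu => by
      show (G.degree u : ℝ) * (H u v - hitCand G u v)
        = ∑ w ∈ G.neighborFinset u, (H w v - hitCand G w v)
      rw [Finset.sum_sub_distrib, mul_sub, hH.2 u v hu, hitCand_eq G hG hu]; ring)
  have := h0 u
  linarith

end Aux

/-- For a finite tree `T`, `2 W_T = |V_T| · F̄_T`, where `F̄_T` is the mean
first-passage time; equivalently, the sum of first-passage times over all ordered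
pairs of distinct vertices equals `2(|V_T| − 1) W_T`. -/
theorem wiener_eq_mfpt_tree {V : Type*} [Fintype V] [DecidableEq V]
    (G : SimpleGraph V) [DecidableRel G.Adj] (hG : G.IsTree)
    (H : V → V → ℝ) (hH : IsHittingTime G H) :
    2 * wienerIndex G
        = (Fintype.card V : ℝ) *
          ((∑ u : V, ∑ v ∈ Finset.univ.erase u, H u v) /
            ((Fintype.card V : ℝ) * ((Fintype.card V : ℝ) - 1))) ∧
    (∑ u : V, ∑ v ∈ Finset.univ.erase u, H u v)
        = 2 * ((Fintype.card V : ℝ) - 1) * wienerIndex G := by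
  have hHc := hitting_eq_hitCand G hG H hH
  have hzero : ∑ u : V, ∑ v : V, (distSumW G v - distSumW G u) = 0 := by
    simp only [Finset.sum_sub_distrib]
    rw [Finset.sum_comm (f := fun (u v : V) => distSumW G u)]
    exact sub_self _
  have hsum : (∑ u : V, ∑ v ∈ Finset.univ.erase u, H u v)
      = 2 * ((Fintype.card V : ℝ) - 1) * wienerIndex G := by
    have h1 : ∀ u : V, ∑ v ∈ Finset.univ.erase u, H u v = ∑ v : V, hitCand G u v := by
      intro u
      rw [Finset.sum_congr rfl (fun v _ => hHc u v),
        ← Finset.add_sum_erase _ (fun v => hitCand G u v) (Finset.mem_univ u),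
        hitCand_self, zero_add]
    rw [Finset.sum_congr rfl (fun u _ => h1 u)]
    simp only [hitCand]
    rw [Finset.sum_congr rfl (fun u _ => Finset.sum_add_distrib), Finset.sum_add_distrib]
    have h2 : ∑ u : V, ∑ v : V, (distSumW G v - distSumW G u) / 2 = 0 := by
      simp only [← Finset.sum_div, hzero, zero_div]
    rw [h2, add_zero, Finset.sum_congr rfl (fun u _ => (Finset.mul_sum _ _ _).symm),
      ← Finset.mul_sum, wienerIndex]
    ring
  refine ⟨?_, hsum⟩
  rcases Nat.lt_or_ge (Fintype.card V) 2 with hc | hc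
  · have hc1 : Fintype.card V = 1 := by
      have := Fintype.card_pos_iff.mpr hG.isConnected.nonempty
      omega
    have hall : ∀ u v : V, u = v := by
      obtain ⟨x, hx⟩ := Fintype.card_eq_one_iff.mp hc1
      intro u v; rw [hx u, hx v]
    have hd0 : ∀ u v : V, (G.dist u v : ℝ) = 0 := by
      intro u v; rw [hall u v, SimpleGraph.dist_self, Nat.cast_zero]
    have hW : wienerIndex G = 0 := by
      simp [wienerIndex, hd0]
    rw [hW, hc1, hsum, hW]
    norm_num
  · have hn0 : (Fintype.card V : ℝ) ≠ 0 := by positivity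
    have hn1 : (Fintype.card V : ℝ) - 1 ≠ 0 := by
      have : (2 : ℝ) ≤ (Fintype.card V : ℝ) := by exact_mod_cast hc
      linarith
    rw [hsum]
    field_simp
end

section
/- Let Y_I(t) be the deterministic uniform growth tree defined by: Y_I(0) is a single edge (two vertices joined by an edge), and for t ≥ 1, Y_I(t) is obtained from Y_I(t−1) by attaching μ new pendant (leaf) vertices to every vertex, where μ ≥ 1 is a fixed integer. Then for every t ≥ 0 the mean first-passage time of the simple random walk on Y_I(t) is F̄(Y_I(t)) = (4μt + μ − 1)(1 + μ)^{t−1} + 2/(1 + μ). -/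
set_option autoImplicit false

open Finset

/-- The two endpoints of an unordered pair, as a `Finset`. -/
def sym2Finset (e : Sym2 ℕ) : Finset ℕ :=
  Sym2.lift ⟨fun a b => {a, b}, fun a b => by ext x; simp [or_comm]⟩ e

/-- The vertex set of the graph on `ℕ` whose edge set is the finite set `E`. -/
def verts (E : Finset (Sym2 ℕ)) : Finset ℕ := E.biUnion sym2Finset

/-- A base label strictly larger than every vertex label used in `E`. -/
def freshE (E : Finset (Sym2 ℕ)) : ℕ := (verts E).sup id + 1

/-- Degree of the vertex `v` in the graph with edge set `E`. -/
def degE (E : Finset (Sym2 ℕ)) (v : ℕ) : ℕ :=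
  ((verts E).filter (fun w => s(v, w) ∈ E)).card

/-- `H` is the matrix of first-passage times (expected hitting times) of the simple
random walk on the graph with edge set `E`:  `H u v` is the expected number of steps
for the walk started at `u` to first reach `v`.  It is characterized by `H v v = 0`
together with the one-step (harmonic) equations on the vertex set. -/
def IsHT (E : Finset (Sym2 ℕ)) (H : ℕ → ℕ → ℝ) : Prop :=
  (∀ v ∈ verts E, H v v = 0) ∧
  ∀ u ∈ verts E, ∀ v ∈ verts E, u ≠ v →
    (degE E u : ℝ) * H u v
      = (degE E u : ℝ) + ∑ w ∈ verts E, if s(u, w) ∈ E then H w v else 0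

/-- One step of deterministic uniform growth: attach `μ` new pendant (leaf) vertices
to every vertex, with fresh labels. -/
def stepYI (μ : ℕ) (E : Finset (Sym2 ℕ)) : Finset (Sym2 ℕ) :=
  E ∪ ((verts E) ×ˢ Finset.range μ).image
      (fun vk => s(vk.1, freshE E + Nat.pair vk.1 vk.2))

/-- The deterministic uniform growth tree `Y_I(t)`: `Y_I(0)` is a single edge, and
`Y_I(t)` arises from `Y_I(t-1)` by attaching `μ` new leaves to every vertex. -/
def YI (μ t : ℕ) : Finset (Sym2 ℕ) := (stepYI μ)^[t] {s(0, 1)}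

namespace MFPT

/-- label of the `k`-th new leaf attached to `v`. -/
def leafv (E : Finset (Sym2 ℕ)) (v k : ℕ) : ℕ := freshE E + Nat.pair v k

/-- parent function -/
def pa (E : Finset (Sym2 ℕ)) (x : ℕ) : ℕ :=
  if x ∈ verts E then x else (Nat.unpair (x - freshE E)).1

lemma mem_sym2Finset {x a b : ℕ} : x ∈ sym2Finset s(a,b) ↔ x = a ∨ x = b := by
  simp [sym2Finset]

lemma mem_verts_left {E : Finset (Sym2 ℕ)} {a b : ℕ} (h : s(a,b) ∈ E) : a ∈ verts E :=
  Finset.mem_biUnion.2 ⟨_, h, mem_sym2Finset.2 (Or.inl rfl)⟩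

lemma mem_verts_right {E : Finset (Sym2 ℕ)} {a b : ℕ} (h : s(a,b) ∈ E) : b ∈ verts E :=
  Finset.mem_biUnion.2 ⟨_, h, mem_sym2Finset.2 (Or.inr rfl)⟩

lemma lt_freshE {E : Finset (Sym2 ℕ)} {x : ℕ} (hx : x ∈ verts E) : x < freshE E :=
  Nat.lt_succ_of_le (Finset.le_sup (f := id) hx)

lemma leafv_not_mem {E : Finset (Sym2 ℕ)} {v k : ℕ} : leafv E v k ∉ verts E := by
  intro h
  have := lt_freshE h
  have : freshE E + Nat.pair v k < freshE E := this
  omega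

lemma leafv_inj {E : Finset (Sym2 ℕ)} {v k v' k' : ℕ} :
    leafv E v k = leafv E v' k' ↔ v = v' ∧ k = k' := by
  unfold leafv
  rw [add_right_inj, Nat.pair_eq_pair]

lemma pa_old {E : Finset (Sym2 ℕ)} {x : ℕ} (hx : x ∈ verts E) : pa E x = x := by
  simp [pa, hx]

lemma pa_leaf {E : Finset (Sym2 ℕ)} {v k : ℕ} : pa E (leafv E v k) = v := by
  rw [pa, if_neg leafv_not_mem, leafv, Nat.add_sub_cancel_left, Nat.unpair_pair]

lemma edge_step_iff {μ : ℕ} {E : Finset (Sym2 ℕ)} {e : Sym2 ℕ} :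
    e ∈ stepYI μ E ↔ e ∈ E ∨ ∃ v ∈ verts E, ∃ k < μ, e = s(v, leafv E v k) := by
  simp only [stepYI, Finset.mem_union, Finset.mem_image, Finset.mem_product, Finset.mem_range]
  constructor
  · rintro (h | ⟨⟨v, k⟩, ⟨hv, hk⟩, rfl⟩)
    · exact Or.inl h
    · exact Or.inr ⟨v, hv, k, hk, rfl⟩
  · rintro (h | ⟨v, hv, k, hk, rfl⟩)
    · exact Or.inl h
    · exact Or.inr ⟨⟨v, k⟩, ⟨hv, hk⟩, rfl⟩

lemma verts_step {μ : ℕ} {E : Finset (Sym2 ℕ)} :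
    verts (stepYI μ E) =
      verts E ∪ ((verts E) ×ˢ Finset.range μ).image (fun p => leafv E p.1 p.2) := by
  ext x
  simp only [verts, Finset.mem_biUnion, Finset.mem_union, Finset.mem_image,
    Finset.mem_product, Finset.mem_range]
  constructor
  · rintro ⟨e, he, hx⟩
    rcases edge_step_iff.1 he with h | ⟨v, hv, k, hk, rfl⟩
    · exact Or.inl ⟨e, h, hx⟩
    · rcases mem_sym2Finset.1 hx with rfl | rfl
      · exact Or.inl (by simpa [verts] using hv)
      · exact Or.inr ⟨⟨v, k⟩, ⟨by simpa [verts] using hv, hk⟩, rfl⟩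
  · rintro (⟨e, he, hx⟩ | ⟨⟨v, k⟩, ⟨hv, hk⟩, rfl⟩)
    · exact ⟨e, Finset.mem_union_left _ he, hx⟩
    · refine ⟨s(v, leafv E v k), ?_, mem_sym2Finset.2 (Or.inr rfl)⟩
      exact edge_step_iff.2 (Or.inr ⟨v, by simpa [verts] using hv, k, hk, rfl⟩)

lemma adj_old_iff {μ : ℕ} {E : Finset (Sym2 ℕ)} {v w : ℕ}
    (hv : v ∈ verts E) (hw : w ∈ verts E) :
    s(v,w) ∈ stepYI μ E ↔ s(v,w) ∈ E := by
  rw [edge_step_iff]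
  constructor
  · rintro (h | ⟨a, ha, k, hk, he⟩)
    · exact h
    · rw [Sym2.eq_iff] at he
      rcases he with ⟨rfl, rfl⟩ | ⟨rfl, rfl⟩
      · exact absurd hw leafv_not_mem
      · exact absurd hv leafv_not_mem
  · exact Or.inl

lemma adj_old_leaf_iff {μ : ℕ} {E : Finset (Sym2 ℕ)} {v a k : ℕ}
    (hv : v ∈ verts E) (ha : a ∈ verts E) (hk : k < μ) :
    s(v, leafv E a k) ∈ stepYI μ E ↔ a = v := by
  rw [edge_step_iff]
  constructor
  · rintro (h | ⟨b, hb, j, hj, he⟩)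
    · exact absurd (mem_verts_right h) leafv_not_mem
    · rw [Sym2.eq_iff] at he
      rcases he with ⟨rfl, hl⟩ | ⟨hl, rfl⟩
      · exact (leafv_inj.1 hl).1
      · exact absurd hv (hl ▸ leafv_not_mem)
  · rintro rfl
    exact Or.inr ⟨a, ha, k, hk, rfl⟩

lemma adj_leaf_iff {μ : ℕ} {E : Finset (Sym2 ℕ)} {v k w : ℕ}
    (hv : v ∈ verts E) (hk : k < μ) :
    s(leafv E v k, w) ∈ stepYI μ E ↔ w = v := by
  rw [edge_step_iff]
  constructor
  · rintro (h | ⟨b, hb, j, hj, he⟩)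
    · exact absurd (mem_verts_left h) leafv_not_mem
    · rw [Sym2.eq_iff] at he
      rcases he with ⟨hl, rfl⟩ | ⟨hl, rfl⟩
      · exact absurd hb (hl ▸ leafv_not_mem)
      · exact (leafv_inj.1 hl).1.symm
  · rintro rfl
    exact Or.inr ⟨_, hv, k, hk, Sym2.eq_swap⟩

lemma step_disj_verts {μ : ℕ} {E : Finset (Sym2 ℕ)} :
    Disjoint (verts E) (((verts E) ×ˢ Finset.range μ).image (fun p => leafv E p.1 p.2)) := by
  rw [Finset.disjoint_right]
  intro x hx
  rcases Finset.mem_image.1 hx with ⟨p, _, rfl⟩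
  exact leafv_not_mem

lemma leafv_injOn {μ : ℕ} {E : Finset (Sym2 ℕ)} :
    ∀ p ∈ (verts E) ×ˢ Finset.range μ, ∀ q ∈ (verts E) ×ˢ Finset.range μ,
      (fun p : ℕ × ℕ => leafv E p.1 p.2) p = (fun p : ℕ × ℕ => leafv E p.1 p.2) q → p = q := by
  rintro ⟨a, b⟩ _ ⟨c, d⟩ _ h
  have := leafv_inj.1 h
  exact Prod.ext this.1 this.2

lemma sum_verts_step {M : Type*} [AddCommMonoid M] (μ : ℕ) (E : Finset (Sym2 ℕ)) (g : ℕ → M) :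
    ∑ x ∈ verts (stepYI μ E), g x
      = ∑ x ∈ verts E, g x + ∑ v ∈ verts E, ∑ k ∈ Finset.range μ, g (leafv E v k) := by
  rw [verts_step, Finset.sum_union step_disj_verts,
    Finset.sum_image leafv_injOn, Finset.sum_product]

lemma nbr_sum_old {M : Type*} [AddCommMonoid M] {μ : ℕ} {E : Finset (Sym2 ℕ)} {v : ℕ}
    (hv : v ∈ verts E) (g : ℕ → M) :
    ∑ w ∈ verts (stepYI μ E), (if s(v,w) ∈ stepYI μ E then g w else 0)
      = (∑ w ∈ verts E, if s(v,w) ∈ E then g w else 0)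
        + ∑ k ∈ Finset.range μ, g (leafv E v k) := by
  rw [sum_verts_step]
  congr 1
  · exact Finset.sum_congr rfl fun w hw => by simp only [adj_old_iff hv hw]
  · have h1 : ∀ a ∈ verts E, (∑ k ∈ Finset.range μ,
        if s(v, leafv E a k) ∈ stepYI μ E then g (leafv E a k) else 0)
        = if a = v then (∑ k ∈ Finset.range μ, g (leafv E a k)) else 0 := by
      intro a ha
      by_cases hav : a = v
      · rw [if_pos hav]
        exact Finset.sum_congr rfl fun k hk =>
          if_pos ((adj_old_leaf_iff hv ha (Finset.mem_range.1 hk)).2 hav)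
      · rw [if_neg hav]
        refine Finset.sum_eq_zero fun k hk => ?_
        rw [if_neg]
        rw [adj_old_leaf_iff hv ha (Finset.mem_range.1 hk)]
        exact hav
    rw [Finset.sum_congr rfl h1, Finset.sum_ite_eq' (verts E) v, if_pos hv]

lemma nbr_sum_leaf {M : Type*} [AddCommMonoid M] {μ : ℕ} {E : Finset (Sym2 ℕ)} {v k : ℕ}
    (hv : v ∈ verts E) (hk : k < μ) (g : ℕ → M) :
    ∑ w ∈ verts (stepYI μ E), (if s(leafv E v k, w) ∈ stepYI μ E then g w else 0) = g v := by
  rw [sum_verts_step]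
  have h1 : (∑ w ∈ verts E, if s(leafv E v k, w) ∈ stepYI μ E then g w else 0)
      = ∑ w ∈ verts E, if w = v then g w else 0 := by
    exact Finset.sum_congr rfl fun w hw => by simp only [adj_leaf_iff hv hk]
  have h2 : ∀ a ∈ verts E, (∑ j ∈ Finset.range μ,
      if s(leafv E v k, leafv E a j) ∈ stepYI μ E then g (leafv E a j) else 0) = 0 := by
    intro a ha
    refine Finset.sum_eq_zero fun j hj => ?_
    rw [if_neg]
    rw [adj_leaf_iff hv hk]
    exact fun h => leafv_not_mem (h ▸ hv)
  rw [h1, Finset.sum_congr rfl h2, Finset.sum_ite_eq' (verts E) v, if_pos hv]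
  simp

lemma degE_eq_sum (E : Finset (Sym2 ℕ)) (v : ℕ) :
    degE E v = ∑ w ∈ verts E, if s(v,w) ∈ E then 1 else 0 :=
  Finset.card_filter _ _

lemma degE_step_old {μ : ℕ} {E : Finset (Sym2 ℕ)} {v : ℕ} (hv : v ∈ verts E) :
    degE (stepYI μ E) v = degE E v + μ := by
  rw [degE_eq_sum, nbr_sum_old hv (fun _ => (1:ℕ)), ← degE_eq_sum]
  simp

lemma degE_step_leaf {μ : ℕ} {E : Finset (Sym2 ℕ)} {v k : ℕ} (hv : v ∈ verts E) (hk : k < μ) :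
    degE (stepYI μ E) (leafv E v k) = 1 := by
  rw [degE_eq_sum, nbr_sum_leaf hv hk (fun _ => (1:ℕ))]

lemma card_verts_step {μ : ℕ} {E : Finset (Sym2 ℕ)} :
    (verts (stepYI μ E)).card = (1+μ) * (verts E).card := by
  have h := sum_verts_step μ E (fun _ => (1:ℕ))
  simp only [Finset.sum_const, smul_eq_mul, mul_one, Finset.card_range] at h
  rw [h]; ring

lemma card_step {μ : ℕ} {E : Finset (Sym2 ℕ)} :
    (stepYI μ E).card = E.card + μ * (verts E).card := by
  rw [stepYI, Finset.card_union_of_disjoint, Finset.card_image_of_injOn, Finset.card_product,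
    Finset.card_range]
  · ring
  · rintro ⟨a, b⟩ hab ⟨c, d⟩ hcd h
    simp only [Finset.coe_product, Set.mem_prod, Finset.mem_coe, Finset.coe_range,
      Set.mem_Iio] at hab hcd
    simp only [Sym2.eq_iff] at h
    rcases h with ⟨rfl, hl⟩ | ⟨hl, hl2⟩
    · have := leafv_inj.1 hl
      exact Prod.ext rfl this.2
    · exact absurd hab.1 (hl ▸ leafv_not_mem)
  · rw [Finset.disjoint_right]
    intro e he
    rcases Finset.mem_image.1 he with ⟨p, _, rfl⟩
    exact fun h => leafv_not_mem (mem_verts_right h)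


lemma YI_succ (μ t : ℕ) : YI μ (t+1) = stepYI μ (YI μ t) :=
  Function.iterate_succ_apply' _ _ _

/-- recursive graph distance matrix -/
noncomputable def df (μ : ℕ) : ℕ → ℕ → ℕ → ℝ
  | 0 => fun u v => if u = v then 0 else 1
  | (t+1) => fun u v => if u = v then 0 else
      df μ t (pa (YI μ t) u) (pa (YI μ t) v)
        + (if u ∈ verts (YI μ t) then 0 else 1)
        + (if v ∈ verts (YI μ t) then 0 else 1)

/-- recursive hitting time matrix -/
noncomputable def Hf (μ : ℕ) : ℕ → ℕ → ℕ → ℝ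
  | 0 => fun u v => if u = v then 0 else 1
  | (t+1) => fun u v => if u = v then 0 else
      (1+(μ:ℝ)) * Hf μ t (pa (YI μ t) u) (pa (YI μ t) v)
        + (μ:ℝ) * df μ t (pa (YI μ t) u) (pa (YI μ t) v)
        + (if u ∈ verts (YI μ t) then 0 else 1)
        + (if v ∈ verts (YI μ t) then 0 else (2*((YI μ (t+1)).card : ℝ) - 1))

noncomputable def fT (μ t : ℕ) : ℝ :=
  ((4*(μ:ℝ)*(t:ℝ) + (μ:ℝ)) - 1) * (1+(μ:ℝ))^t/(1+(μ:ℝ)) + 2/(1+(μ:ℝ))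

lemma df_diag (μ t v : ℕ) : df μ t v v = 0 := by cases t <;> simp [df]

lemma Hf_diag (μ t v : ℕ) : Hf μ t v v = 0 := by cases t <;> simp [Hf]

lemma df_succ (μ t : ℕ) {u v : ℕ} (h : u ≠ v) :
    df μ (t+1) u v = df μ t (pa (YI μ t) u) (pa (YI μ t) v)
        + (if u ∈ verts (YI μ t) then 0 else 1)
        + (if v ∈ verts (YI μ t) then 0 else 1) := by
  simp only [df, if_neg h]

lemma Hf_succ (μ t : ℕ) {u v : ℕ} (h : u ≠ v) :
    Hf μ (t+1) u v = (1+(μ:ℝ)) * Hf μ t (pa (YI μ t) u) (pa (YI μ t) v)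
        + (μ:ℝ) * df μ t (pa (YI μ t) u) (pa (YI μ t) v)
        + (if u ∈ verts (YI μ t) then 0 else 1)
        + (if v ∈ verts (YI μ t) then 0 else (2*((YI μ (t+1)).card : ℝ) - 1)) := by
  simp only [Hf, if_neg h]

/-- The full induction invariant. -/
structure Inv (μ t : ℕ) : Prop where
  hcard : (verts (YI μ t)).card = 2*(1+μ)^t
  hecard : (YI μ t).card + 1 = 2*(1+μ)^t
  hzero : 0 ∈ verts (YI μ t)
  hHT : IsHT (YI μ t) (Hf μ t)
  hd1 : ∀ u v : ℕ, s(u,v) ∈ YI μ t → df μ t u v = 1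
  hdh : ∀ u ∈ verts (YI μ t), ∀ v ∈ verts (YI μ t), u ≠ v →
      (∑ w ∈ verts (YI μ t), if s(u,w) ∈ YI μ t then df μ t w v else 0)
        = (degE (YI μ t) u : ℝ) * (df μ t u v + 1) - 2
  hret : ∀ v ∈ verts (YI μ t),
      (∑ w ∈ verts (YI μ t), if s(v,w) ∈ YI μ t then Hf μ t w v else 0)
        = 2*((YI μ t).card : ℝ) - (degE (YI μ t) v : ℝ)
  hconn : ∀ f : ℕ → ℝ, (∀ u v : ℕ, s(u,v) ∈ YI μ t → f u = f v) →
      ∀ x ∈ verts (YI μ t), f x = f 0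
  hS : (∑ u ∈ verts (YI μ t), ∑ v ∈ verts (YI μ t), Hf μ t u v)
      = (2*(1+(μ:ℝ))^t - 1) * (2*(1+(μ:ℝ))^t) * fT μ t
  hD : (∑ u ∈ verts (YI μ t), ∑ v ∈ verts (YI μ t), df μ t u v)
      = (2*(1+(μ:ℝ))^t) * fT μ t

lemma YI_zero (μ : ℕ) : YI μ 0 = {s(0,1)} := rfl

lemma verts_YI_zero (μ : ℕ) : verts (YI μ 0) = {0, 1} := by
  rw [YI_zero, verts, Finset.singleton_biUnion]
  ext x; simp [sym2Finset]

lemma edge_zero_iff (μ : ℕ) {a b : ℕ} :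
    s(a,b) ∈ YI μ 0 ↔ (a = 0 ∧ b = 1) ∨ (a = 1 ∧ b = 0) := by
  rw [YI_zero, Finset.mem_singleton, Sym2.eq_iff]

lemma degE_zero (μ : ℕ) {v : ℕ} (hv : v ∈ verts (YI μ 0)) : degE (YI μ 0) v = 1 := by
  rw [verts_YI_zero] at hv
  rw [degE, verts_YI_zero]
  rcases Finset.mem_insert.1 hv with rfl | hv
  · rw [show Finset.filter (fun w => s(0, w) ∈ YI μ 0) {0, 1} = {1} from by
      ext w; simp [edge_zero_iff, Finset.mem_filter]; tauto]
    rfl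
  · rw [Finset.mem_singleton.1 hv]
    rw [show Finset.filter (fun w => s(1, w) ∈ YI μ 0) {0, 1} = {0} from by
      ext w; simp [edge_zero_iff, Finset.mem_filter]; tauto]
    rfl

lemma e01_mem (μ : ℕ) : s(0,1) ∈ YI μ 0 := by rw [YI_zero]; exact Finset.mem_singleton_self _
lemma e10_mem (μ : ℕ) : s(1,0) ∈ YI μ 0 := by
  rw [YI_zero, Finset.mem_singleton]; rw [Sym2.eq_iff]; tauto
lemma e00_not_mem (μ : ℕ) : s((0:ℕ),0) ∉ YI μ 0 := by
  rw [YI_zero, Finset.mem_singleton, Sym2.eq_iff]; simp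
lemma e11_not_mem (μ : ℕ) : s((1:ℕ),1) ∉ YI μ 0 := by
  rw [YI_zero, Finset.mem_singleton, Sym2.eq_iff]; simp

lemma inv_zero (μ : ℕ) (hμ : 1 ≤ μ) : Inv μ 0 := by
  have hμR : (1+(μ:ℝ)) ≠ 0 := by positivity
  have hfT0 : fT μ 0 = 1 := by
    unfold fT
    field_simp
    ring
  have hv0 : verts (YI μ 0) = {0, 1} := verts_YI_zero μ
  have hE0 : (YI μ 0).card = 1 := rfl
  refine ⟨?_, ?_, ?_, ⟨?_, ?_⟩, ?_, ?_, ?_, ?_, ?_, ?_⟩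
  · rw [hv0]; rfl
  · rfl
  · rw [hv0]; simp
  · intro v _; exact Hf_diag μ 0 v
  · intro u hu v hv huv
    rw [hv0] at hu hv
    rw [degE_zero μ (hv0 ▸ hu)]
    rw [hv0]
    fin_cases hu <;> fin_cases hv <;> simp_all <;>
      · simp [Hf, Finset.sum_pair, e01_mem, e10_mem, e00_not_mem, e11_not_mem, ← Prod.mk_zero_zero, ← Prod.mk_one_one] <;> norm_num
  · intro u v h
    rcases (edge_zero_iff μ).1 h with ⟨rfl, rfl⟩ | ⟨rfl, rfl⟩ <;> simp [df]
  · intro u hu v hv huv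
    rw [hv0] at hu hv
    rw [degE_zero μ (hv0 ▸ hu)]
    rw [hv0]
    fin_cases hu <;> fin_cases hv <;> simp_all <;>
      · simp [df, Finset.sum_pair, e01_mem, e10_mem, e00_not_mem, e11_not_mem, ← Prod.mk_zero_zero, ← Prod.mk_one_one] <;> norm_num
  · intro v hv
    rw [hv0] at hv
    rw [degE_zero μ (hv0 ▸ hv), hE0]
    rw [hv0]
    fin_cases hv <;>
      · simp [Hf, Finset.sum_pair, e01_mem, e10_mem, e00_not_mem, e11_not_mem, ← Prod.mk_zero_zero, ← Prod.mk_one_one] <;> norm_num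
  · intro f hf x hx
    rw [hv0] at hx
    fin_cases hx
    · rfl
    · exact (hf 0 1 (by rw [YI_zero]; exact Finset.mem_singleton_self _)).symm
  · rw [hv0, hfT0]
    simp [Hf, Finset.sum_pair]
    norm_num
  · rw [hv0, hfT0]
    simp [df, Finset.sum_pair]
    norm_num


section Step

variable {μ t : ℕ}

lemma mem_verts_step_iff {x : ℕ} {E : Finset (Sym2 ℕ)} :
    x ∈ verts (stepYI μ E) ↔ x ∈ verts E ∨ ∃ a ∈ verts E, ∃ k < μ, x = leafv E a k := by
  rw [verts_step]
  simp only [Finset.mem_union, Finset.mem_image, Finset.mem_product, Finset.mem_range]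
  constructor
  · rintro (h | ⟨⟨a, k⟩, ⟨ha, hk⟩, rfl⟩)
    · exact Or.inl h
    · exact Or.inr ⟨a, ha, k, hk, rfl⟩
  · rintro (h | ⟨a, ha, k, hk, rfl⟩)
    · exact Or.inl h
    · exact Or.inr ⟨⟨a, k⟩, ⟨ha, hk⟩, rfl⟩

/-- abbreviation for the edge-count of the next level, as a real. -/
noncomputable def MM (μ t : ℕ) : ℝ := ((YI μ (t+1)).card : ℝ)

lemma Hf_oo {u v : ℕ} (hu : u ∈ verts (YI μ t)) (hv : v ∈ verts (YI μ t)) :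
    Hf μ (t+1) u v = (1+(μ:ℝ)) * Hf μ t u v + (μ:ℝ) * df μ t u v := by
  by_cases h : u = v
  · subst h; rw [Hf_diag, Hf_diag, df_diag]; ring
  · rw [Hf_succ μ t h, pa_old hu, pa_old hv, if_pos hu, if_pos hv]; ring

lemma Hf_lo {u k v : ℕ} (hu : u ∈ verts (YI μ t)) (hv : v ∈ verts (YI μ t)) :
    Hf μ (t+1) (leafv (YI μ t) u k) v
      = (1+(μ:ℝ)) * Hf μ t u v + (μ:ℝ) * df μ t u v + 1 := by
  have hne : leafv (YI μ t) u k ≠ v := fun h => leafv_not_mem (h ▸ hv)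
  rw [Hf_succ μ t hne, pa_leaf, pa_old hv, if_neg leafv_not_mem, if_pos hv]; ring

lemma Hf_ol {u v j : ℕ} (hu : u ∈ verts (YI μ t)) (hv : v ∈ verts (YI μ t)) :
    Hf μ (t+1) u (leafv (YI μ t) v j)
      = (1+(μ:ℝ)) * Hf μ t u v + (μ:ℝ) * df μ t u v + (2*MM μ t - 1) := by
  have hne : u ≠ leafv (YI μ t) v j := fun h => leafv_not_mem (h ▸ hu)
  rw [Hf_succ μ t hne, pa_leaf, pa_old hu, if_pos hu, if_neg leafv_not_mem, MM]; ring

lemma Hf_ll {u k v j : ℕ} (hu : u ∈ verts (YI μ t)) (hv : v ∈ verts (YI μ t)) :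
    Hf μ (t+1) (leafv (YI μ t) u k) (leafv (YI μ t) v j)
      = ((1+(μ:ℝ)) * Hf μ t u v + (μ:ℝ) * df μ t u v + 2*MM μ t)
        - (if u = v ∧ k = j then 2*MM μ t else 0) := by
  by_cases h : u = v ∧ k = j
  · obtain ⟨rfl, rfl⟩ := h
    rw [if_pos ⟨rfl, rfl⟩, Hf_diag, Hf_diag, df_diag]; ring
  · have hne : leafv (YI μ t) u k ≠ leafv (YI μ t) v j := fun he => h (leafv_inj.1 he)
    rw [if_neg h, Hf_succ μ t hne, pa_leaf, pa_leaf, if_neg leafv_not_mem,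
      if_neg leafv_not_mem, MM]; ring

lemma df_oo {u v : ℕ} (hu : u ∈ verts (YI μ t)) (hv : v ∈ verts (YI μ t)) :
    df μ (t+1) u v = df μ t u v := by
  by_cases h : u = v
  · subst h; rw [df_diag, df_diag]
  · rw [df_succ μ t h, pa_old hu, pa_old hv, if_pos hu, if_pos hv]; ring

lemma df_lo {u k v : ℕ} (hu : u ∈ verts (YI μ t)) (hv : v ∈ verts (YI μ t)) :
    df μ (t+1) (leafv (YI μ t) u k) v = df μ t u v + 1 := by
  have hne : leafv (YI μ t) u k ≠ v := fun h => leafv_not_mem (h ▸ hv)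
  rw [df_succ μ t hne, pa_leaf, pa_old hv, if_neg leafv_not_mem, if_pos hv]; ring

lemma df_ol {u v j : ℕ} (hu : u ∈ verts (YI μ t)) (hv : v ∈ verts (YI μ t)) :
    df μ (t+1) u (leafv (YI μ t) v j) = df μ t u v + 1 := by
  have hne : u ≠ leafv (YI μ t) v j := fun h => leafv_not_mem (h ▸ hu)
  rw [df_succ μ t hne, pa_leaf, pa_old hu, if_pos hu, if_neg leafv_not_mem]; ring

lemma df_ll {u k v j : ℕ} (hu : u ∈ verts (YI μ t)) (hv : v ∈ verts (YI μ t)) :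
    df μ (t+1) (leafv (YI μ t) u k) (leafv (YI μ t) v j)
      = (df μ t u v + 2) - (if u = v ∧ k = j then 2 else 0) := by
  by_cases h : u = v ∧ k = j
  · obtain ⟨rfl, rfl⟩ := h
    rw [if_pos ⟨rfl, rfl⟩, df_diag, df_diag]; ring
  · have hne : leafv (YI μ t) u k ≠ leafv (YI μ t) v j := fun he => h (leafv_inj.1 he)
    rw [if_neg h, df_succ μ t hne, pa_leaf, pa_leaf, if_neg leafv_not_mem,
      if_neg leafv_not_mem]; ring

/-- linear decomposition of an indicator sum -/
lemma sum_ite_lin (W : Finset ℕ) (c : ℕ → Prop) [DecidablePred c] (A B C : ℝ)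
    (h d : ℕ → ℝ) :
    (∑ w ∈ W, if c w then A * h w + B * d w + C else 0)
      = A * (∑ w ∈ W, if c w then h w else 0) + B * (∑ w ∈ W, if c w then d w else 0)
        + C * (∑ w ∈ W, if c w then (1:ℝ) else 0) := by
  rw [Finset.mul_sum, Finset.mul_sum, Finset.mul_sum, ← Finset.sum_add_distrib,
    ← Finset.sum_add_distrib]
  refine Finset.sum_congr rfl fun w _ => ?_
  split <;> ring

lemma sum_ite_one_eq_deg (E : Finset (Sym2 ℕ)) (u : ℕ) :
    (∑ w ∈ verts E, if s(u,w) ∈ E then (1:ℝ) else 0) = (degE E u : ℝ) := by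
  rw [degE_eq_sum]
  push_cast
  rfl

end Step


section StepProofs

variable {μ t : ℕ}

lemma hM_fact (ih : Inv μ t) :
    MM μ t = (1+(μ:ℝ)) * ((YI μ t).card : ℝ) + (μ:ℝ) := by
  have h1 : (YI μ (t+1)).card = (YI μ t).card + μ * (verts (YI μ t)).card := by
    rw [YI_succ]; exact card_step
  have h2 : (verts (YI μ t)).card = (YI μ t).card + 1 := by
    have ha := ih.hcard; have hb := ih.hecard; omega
  rw [MM, h1, h2]; push_cast; ring

lemma d_adj_one (ih : Inv μ t) {u w : ℕ} (h : s(u,w) ∈ YI μ t) : df μ t w u = 1 :=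
  ih.hd1 w u (Sym2.eq_swap ▸ h)

lemma sum_d_adj (ih : Inv μ t) {u : ℕ} :
    (∑ w ∈ verts (YI μ t), if s(u,w) ∈ YI μ t then df μ t w u else 0)
      = (degE (YI μ t) u : ℝ) := by
  rw [← sum_ite_one_eq_deg]
  refine Finset.sum_congr rfl fun w _ => ?_
  by_cases h : s(u,w) ∈ YI μ t
  · rw [if_pos h, if_pos h, d_adj_one ih h]
  · rw [if_neg h, if_neg h]

lemma step_HT (hμ : 1 ≤ μ) (ih : Inv μ t) : IsHT (YI μ (t+1)) (Hf μ (t+1)) := by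
  have hstep : YI μ (t+1) = stepYI μ (YI μ t) := YI_succ μ t
  have hM := hM_fact ih
  constructor
  · exact fun v _ => Hf_diag μ (t+1) v
  intro u hu v hv huv
  rw [hstep] at hu hv ⊢
  rcases mem_verts_step_iff.1 hu with huW | ⟨u0, hu0, k, hk, rfl⟩
  · -- u old
    rw [degE_step_old huW, nbr_sum_old huW (fun w => Hf μ (t+1) w v)]
    rcases mem_verts_step_iff.1 hv with hvW | ⟨v0, hv0, j, hj, rfl⟩
    · -- v old
      have hHsum := ih.hHT.2 u huW v hvW huv
      have hdsum := ih.hdh u huW v hvW huv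
      have e1 : (∑ w ∈ verts (YI μ t), if s(u,w) ∈ YI μ t then Hf μ (t+1) w v else 0)
          = (1+(μ:ℝ)) * (∑ w ∈ verts (YI μ t), if s(u,w) ∈ YI μ t then Hf μ t w v else 0)
            + (μ:ℝ) * (∑ w ∈ verts (YI μ t), if s(u,w) ∈ YI μ t then df μ t w v else 0)
            + 0 * (∑ w ∈ verts (YI μ t), if s(u,w) ∈ YI μ t then (1:ℝ) else 0) := by
        rw [← sum_ite_lin]
        refine Finset.sum_congr rfl fun w hw => ?_
        by_cases h : s(u,w) ∈ YI μ t
        · rw [if_pos h, if_pos h, Hf_oo hw hvW]; ring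
        · rw [if_neg h, if_neg h]
      have e2 : (∑ k' ∈ Finset.range μ, Hf μ (t+1) (leafv (YI μ t) u k') v)
          = (μ:ℝ) * ((1+(μ:ℝ)) * Hf μ t u v + (μ:ℝ) * df μ t u v + 1) := by
        rw [Finset.sum_congr rfl fun k' _ => Hf_lo huW hvW, Finset.sum_const,
          Finset.card_range, nsmul_eq_mul]
      rw [Hf_oo huW hvW, e1, e2, sum_ite_one_eq_deg]
      push_cast
      linear_combination (1+(μ:ℝ)) * hHsum - (μ:ℝ) * hdsum
    · -- v = leaf (v0, j)
      have e1 : (∑ w ∈ verts (YI μ t),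
            if s(u,w) ∈ YI μ t then Hf μ (t+1) w (leafv (YI μ t) v0 j) else 0)
          = (1+(μ:ℝ)) * (∑ w ∈ verts (YI μ t), if s(u,w) ∈ YI μ t then Hf μ t w v0 else 0)
            + (μ:ℝ) * (∑ w ∈ verts (YI μ t), if s(u,w) ∈ YI μ t then df μ t w v0 else 0)
            + (2*MM μ t - 1)
              * (∑ w ∈ verts (YI μ t), if s(u,w) ∈ YI μ t then (1:ℝ) else 0) := by
        rw [← sum_ite_lin]
        refine Finset.sum_congr rfl fun w hw => ?_
        by_cases h : s(u,w) ∈ YI μ t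
        · rw [if_pos h, if_pos h, Hf_ol hw hv0]
        · rw [if_neg h, if_neg h]
      have e3 : (∑ k' ∈ Finset.range μ,
            if u = v0 ∧ k' = j then (2*MM μ t : ℝ) else 0)
          = if u = v0 then 2*MM μ t else 0 := by
        by_cases h : u = v0
        · simp only [h, true_and, if_pos]
          rw [Finset.sum_ite_eq' (Finset.range μ) j (fun _ => (2*MM μ t : ℝ)),
            if_pos (Finset.mem_range.2 hj)]
        · simp [h]
      have e2 : (∑ k' ∈ Finset.range μ,
            Hf μ (t+1) (leafv (YI μ t) u k') (leafv (YI μ t) v0 j))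
          = (μ:ℝ) * ((1+(μ:ℝ)) * Hf μ t u v0 + (μ:ℝ) * df μ t u v0 + 2*MM μ t)
            - (if u = v0 then 2*MM μ t else 0) := by
        rw [Finset.sum_congr rfl fun k' _ => Hf_ll huW hv0, Finset.sum_sub_distrib, e3,
          Finset.sum_const, Finset.card_range, nsmul_eq_mul]
      rw [Hf_ol huW hv0, e1, e2, sum_ite_one_eq_deg]
      by_cases huv0 : u = v0
      · subst huv0
        rw [if_pos rfl]
        have hret := ih.hret u huW
        have hda := sum_d_adj ih (u := u)
        rw [Hf_diag, df_diag, hret, hda, hM]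
        push_cast
        ring
      · rw [if_neg huv0]
        have hHsum := ih.hHT.2 u huW v0 hv0 huv0
        have hdsum := ih.hdh u huW v0 hv0 huv0
        have hX : (∑ w ∈ verts (YI μ t), if s(u,w) ∈ YI μ t then Hf μ t w v0 else 0)
            = (degE (YI μ t) u : ℝ) * Hf μ t u v0 - (degE (YI μ t) u : ℝ) := by
          linarith [hHsum]
        rw [hX, hdsum]
        push_cast
        ring
  · -- u = leaf (u0, k)
    rw [degE_step_leaf hu0 hk, nbr_sum_leaf hu0 hk (fun w => Hf μ (t+1) w v)]
    rcases mem_verts_step_iff.1 hv with hvW | ⟨v0, hv0, j, hj, rfl⟩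
    · rw [Hf_lo hu0 hvW, Hf_oo hu0 hvW]
      push_cast; ring
    · have h' : ¬(u0 = v0 ∧ k = j) := fun hc => huv (by rw [hc.1, hc.2])
      rw [Hf_ll hu0 hv0, Hf_ol hu0 hv0, if_neg h']
      push_cast; ring

end StepProofs


section StepProofs2

variable {μ t : ℕ}

lemma step_hd1 (ih : Inv μ t) : ∀ u v : ℕ, s(u,v) ∈ YI μ (t+1) → df μ (t+1) u v = 1 := by
  intro u v h
  rw [YI_succ] at h
  rcases edge_step_iff.1 h with hE | ⟨a, ha, k, hk, he⟩
  · have hu := mem_verts_left hE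
    have hv := mem_verts_right hE
    rw [df_oo hu hv]
    exact ih.hd1 u v hE
  · rw [Sym2.eq_iff] at he
    rcases he with ⟨rfl, rfl⟩ | ⟨rfl, rfl⟩
    · rw [df_ol ha ha, df_diag]; ring
    · rw [df_lo ha ha, df_diag]; ring

lemma step_hdh (hμ : 1 ≤ μ) (ih : Inv μ t) :
    ∀ u ∈ verts (YI μ (t+1)), ∀ v ∈ verts (YI μ (t+1)), u ≠ v →
      (∑ w ∈ verts (YI μ (t+1)), if s(u,w) ∈ YI μ (t+1) then df μ (t+1) w v else 0)
        = (degE (YI μ (t+1)) u : ℝ) * (df μ (t+1) u v + 1) - 2 := by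
  intro u hu v hv huv
  rw [YI_succ] at hu hv ⊢
  rcases mem_verts_step_iff.1 hu with huW | ⟨u0, hu0, k, hk, rfl⟩
  · rw [degE_step_old huW, nbr_sum_old huW (fun w => df μ (t+1) w v)]
    rcases mem_verts_step_iff.1 hv with hvW | ⟨v0, hv0, j, hj, rfl⟩
    · -- v old
      have hdsum := ih.hdh u huW v hvW huv
      have e1 : (∑ w ∈ verts (YI μ t), if s(u,w) ∈ YI μ t then df μ (t+1) w v else 0)
          = (∑ w ∈ verts (YI μ t), if s(u,w) ∈ YI μ t then df μ t w v else 0) := by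
        refine Finset.sum_congr rfl fun w hw => ?_
        by_cases h : s(u,w) ∈ YI μ t
        · rw [if_pos h, if_pos h, df_oo hw hvW]
        · rw [if_neg h, if_neg h]
      have e2 : (∑ k' ∈ Finset.range μ, df μ (t+1) (leafv (YI μ t) u k') v)
          = (μ:ℝ) * (df μ t u v + 1) := by
        rw [Finset.sum_congr rfl fun k' _ => df_lo huW hvW, Finset.sum_const,
          Finset.card_range, nsmul_eq_mul]
      rw [df_oo huW hvW, e1, e2, hdsum]
      push_cast; ring
    · -- v = leaf (v0, j)
      have e1 : (∑ w ∈ verts (YI μ t),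
            if s(u,w) ∈ YI μ t then df μ (t+1) w (leafv (YI μ t) v0 j) else 0)
          = 1 * (∑ w ∈ verts (YI μ t), if s(u,w) ∈ YI μ t then df μ t w v0 else 0)
            + 0 * (∑ w ∈ verts (YI μ t), if s(u,w) ∈ YI μ t then df μ t w v0 else 0)
            + 1 * (∑ w ∈ verts (YI μ t), if s(u,w) ∈ YI μ t then (1:ℝ) else 0) := by
        rw [← sum_ite_lin]
        refine Finset.sum_congr rfl fun w hw => ?_
        by_cases h : s(u,w) ∈ YI μ t
        · rw [if_pos h, if_pos h, df_ol hw hv0]; ring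
        · rw [if_neg h, if_neg h]
      have e3 : (∑ k' ∈ Finset.range μ, if u = v0 ∧ k' = j then (2:ℝ) else 0)
          = if u = v0 then 2 else 0 := by
        by_cases h : u = v0
        · simp only [h, true_and, if_pos]
          rw [Finset.sum_ite_eq' (Finset.range μ) j (fun _ => (2:ℝ)),
            if_pos (Finset.mem_range.2 hj)]
        · simp [h]
      have e2 : (∑ k' ∈ Finset.range μ,
            df μ (t+1) (leafv (YI μ t) u k') (leafv (YI μ t) v0 j))
          = (μ:ℝ) * (df μ t u v0 + 2) - (if u = v0 then 2 else 0) := by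
        rw [Finset.sum_congr rfl fun k' _ => df_ll huW hv0, Finset.sum_sub_distrib, e3,
          Finset.sum_const, Finset.card_range, nsmul_eq_mul]
      rw [df_ol huW hv0, e1, e2, sum_ite_one_eq_deg]
      by_cases huv0 : u = v0
      · subst huv0
        rw [if_pos rfl, sum_d_adj ih, df_diag]
        push_cast; ring
      · rw [if_neg huv0, ih.hdh u huW v0 hv0 huv0]
        push_cast; ring
  · -- u = leaf
    rw [degE_step_leaf hu0 hk, nbr_sum_leaf hu0 hk (fun w => df μ (t+1) w v)]
    rcases mem_verts_step_iff.1 hv with hvW | ⟨v0, hv0, j, hj, rfl⟩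
    · rw [df_lo hu0 hvW, df_oo hu0 hvW]
      push_cast; ring
    · have h' : ¬(u0 = v0 ∧ k = j) := fun hc => huv (by rw [hc.1, hc.2])
      rw [df_ll hu0 hv0, df_ol hu0 hv0, if_neg h']
      push_cast; ring

lemma step_hret (hμ : 1 ≤ μ) (ih : Inv μ t) :
    ∀ v ∈ verts (YI μ (t+1)),
      (∑ w ∈ verts (YI μ (t+1)), if s(v,w) ∈ YI μ (t+1) then Hf μ (t+1) w v else 0)
        = 2*((YI μ (t+1)).card : ℝ) - (degE (YI μ (t+1)) v : ℝ) := by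
  intro v hv
  have hM := hM_fact ih
  have hMM : ((stepYI μ (YI μ t)).card : ℝ) = MM μ t := by rw [← YI_succ]; rfl
  rw [YI_succ] at hv ⊢
  rcases mem_verts_step_iff.1 hv with hvW | ⟨v0, hv0, j, hj, rfl⟩
  · rw [degE_step_old hvW, nbr_sum_old hvW (fun w => Hf μ (t+1) w v)]
    have e1 : (∑ w ∈ verts (YI μ t), if s(v,w) ∈ YI μ t then Hf μ (t+1) w v else 0)
        = (1+(μ:ℝ)) * (∑ w ∈ verts (YI μ t), if s(v,w) ∈ YI μ t then Hf μ t w v else 0)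
          + (μ:ℝ) * (∑ w ∈ verts (YI μ t), if s(v,w) ∈ YI μ t then df μ t w v else 0)
          + 0 * (∑ w ∈ verts (YI μ t), if s(v,w) ∈ YI μ t then (1:ℝ) else 0) := by
      rw [← sum_ite_lin]
      refine Finset.sum_congr rfl fun w hw => ?_
      by_cases h : s(v,w) ∈ YI μ t
      · rw [if_pos h, if_pos h, Hf_oo hw hvW]; ring
      · rw [if_neg h, if_neg h]
    have e2 : (∑ k' ∈ Finset.range μ, Hf μ (t+1) (leafv (YI μ t) v k') v)
        = (μ:ℝ) * ((1+(μ:ℝ)) * Hf μ t v v + (μ:ℝ) * df μ t v v + 1) := by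
      rw [Finset.sum_congr rfl fun k' _ => Hf_lo hvW hvW, Finset.sum_const,
        Finset.card_range, nsmul_eq_mul]
    rw [e1, e2, ih.hret v hvW, sum_d_adj ih, Hf_diag, df_diag, hMM, hM]
    push_cast; ring
  · rw [degE_step_leaf hv0 hj, nbr_sum_leaf hv0 hj (fun w => Hf μ (t+1) w (leafv (YI μ t) v0 j))]
    rw [Hf_ol hv0 hv0, Hf_diag, df_diag, hMM]
    push_cast; ring

lemma step_hconn (ih : Inv μ t) :
    ∀ f : ℕ → ℝ, (∀ u v : ℕ, s(u,v) ∈ YI μ (t+1) → f u = f v) →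
      ∀ x ∈ verts (YI μ (t+1)), f x = f 0 := by
  intro f hf x hx
  have hf' : ∀ u v : ℕ, s(u,v) ∈ YI μ t → f u = f v := fun u v h =>
    hf u v (by rw [YI_succ]; exact Finset.mem_union_left _ h)
  rw [YI_succ] at hx
  rcases mem_verts_step_iff.1 hx with hxW | ⟨a, ha, k, hk, rfl⟩
  · exact ih.hconn f hf' x hxW
  · have h1 : f a = f (leafv (YI μ t) a k) :=
      hf a (leafv (YI μ t) a k)
        (by rw [YI_succ]; exact edge_step_iff.2 (Or.inr ⟨a, ha, k, hk, rfl⟩))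
    rw [← h1]; exact ih.hconn f hf' a ha

lemma step_hcard (ih : Inv μ t) : (verts (YI μ (t+1))).card = 2*(1+μ)^(t+1) := by
  rw [YI_succ, card_verts_step, ih.hcard, pow_succ]; ring

lemma step_hecard (ih : Inv μ t) : (YI μ (t+1)).card + 1 = 2*(1+μ)^(t+1) := by
  rw [YI_succ, card_step, ih.hcard, pow_succ]
  calc (YI μ t).card + μ * (2*(1+μ)^t) + 1
      = ((YI μ t).card + 1) + μ * (2*(1+μ)^t) := by ring
    _ = 2*(1+μ)^t + μ * (2*(1+μ)^t) := by rw [ih.hecard]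
    _ = 2*((1+μ)^t*(1+μ)) := by ring

lemma step_hzero (ih : Inv μ t) : 0 ∈ verts (YI μ (t+1)) := by
  rw [YI_succ, verts_step]
  exact Finset.mem_union_left _ ih.hzero

end StepProofs2


section StepSums

variable {μ t : ℕ}

lemma sum2_lin (W : Finset ℕ) (h d : ℕ → ℕ → ℝ) (A B C : ℝ) :
    (∑ u ∈ W, ∑ v ∈ W, (A * h u v + B * d u v + C))
      = A * (∑ u ∈ W, ∑ v ∈ W, h u v) + B * (∑ u ∈ W, ∑ v ∈ W, d u v)
        + ((W.card : ℝ) * (W.card : ℝ)) * C := by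
  simp only [Finset.sum_add_distrib, ← Finset.mul_sum, Finset.sum_const, nsmul_eq_mul]
  ring

lemma expand_double (g : ℕ → ℕ → ℝ) :
    (∑ x ∈ verts (stepYI μ (YI μ t)), ∑ y ∈ verts (stepYI μ (YI μ t)), g x y)
      = ((∑ u ∈ verts (YI μ t), ∑ v ∈ verts (YI μ t), g u v)
          + ∑ u ∈ verts (YI μ t), ∑ v ∈ verts (YI μ t), ∑ j ∈ Finset.range μ,
              g u (leafv (YI μ t) v j))
        + ((∑ u ∈ verts (YI μ t), ∑ k ∈ Finset.range μ, ∑ v ∈ verts (YI μ t),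
              g (leafv (YI μ t) u k) v)
          + ∑ u ∈ verts (YI μ t), ∑ k ∈ Finset.range μ, ∑ v ∈ verts (YI μ t),
              ∑ j ∈ Finset.range μ, g (leafv (YI μ t) u k) (leafv (YI μ t) v j)) := by
  rw [Finset.sum_congr rfl fun x _ => sum_verts_step μ (YI μ t) (fun y => g x y)]
  rw [sum_verts_step μ (YI μ t) _]
  rw [Finset.sum_add_distrib]
  congr 1
  rw [Finset.sum_congr rfl fun u (_ : u ∈ verts (YI μ t)) => Finset.sum_add_distrib,
    Finset.sum_add_distrib]

lemma corr_sum {u k : ℕ} (hu : u ∈ verts (YI μ t)) (hk : k ∈ Finset.range μ) (c : ℝ) :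
    (∑ v ∈ verts (YI μ t), ∑ j ∈ Finset.range μ,
        if u = v ∧ k = j then c else 0) = c := by
  have h1 : ∀ v : ℕ, (∑ j ∈ Finset.range μ, if u = v ∧ k = j then c else 0)
      = if u = v then c else 0 := fun v => by
    by_cases huv : u = v
    · subst huv
      simp [Finset.sum_ite_eq, hk]
    · simp [huv]
  rw [Finset.sum_congr rfl fun v _ => h1 v, Finset.sum_ite_eq (verts (YI μ t)) u (fun _ => c),
    if_pos hu]

lemma step_hD (hμ : 1 ≤ μ) (ih : Inv μ t) :
    (∑ u ∈ verts (YI μ (t+1)), ∑ v ∈ verts (YI μ (t+1)), df μ (t+1) u v)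
      = (2*(1+(μ:ℝ))^(t+1)) * fT μ (t+1) := by
  have hp : (1+(μ:ℝ)) ≠ 0 := by positivity
  have hn : ((verts (YI μ t)).card : ℝ) = 2*(1+(μ:ℝ))^t := by
    rw [ih.hcard]; push_cast; ring
  rw [YI_succ, expand_double]
  have hB1 : (∑ u ∈ verts (YI μ t), ∑ v ∈ verts (YI μ t), df μ (t+1) u v)
      = ∑ u ∈ verts (YI μ t), ∑ v ∈ verts (YI μ t), df μ t u v :=
    Finset.sum_congr rfl fun u hu => Finset.sum_congr rfl fun v hv => df_oo hu hv
  have hB2 : (∑ u ∈ verts (YI μ t), ∑ v ∈ verts (YI μ t), ∑ j ∈ Finset.range μ,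
        df μ (t+1) u (leafv (YI μ t) v j))
      = ∑ u ∈ verts (YI μ t), ∑ v ∈ verts (YI μ t),
          ((μ:ℝ) * df μ t u v + 0 * df μ t u v + (μ:ℝ)) := by
    refine Finset.sum_congr rfl fun u hu => Finset.sum_congr rfl fun v hv => ?_
    rw [Finset.sum_congr rfl fun j _ => df_ol hu hv, Finset.sum_const, Finset.card_range,
      nsmul_eq_mul]
    ring
  have hB3 : (∑ u ∈ verts (YI μ t), ∑ k ∈ Finset.range μ, ∑ v ∈ verts (YI μ t),
        df μ (t+1) (leafv (YI μ t) u k) v)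
      = ∑ u ∈ verts (YI μ t), ∑ v ∈ verts (YI μ t),
          ((μ:ℝ) * df μ t u v + 0 * df μ t u v + (μ:ℝ)) := by
    refine Finset.sum_congr rfl fun u hu => ?_
    rw [Finset.sum_congr rfl fun k _ => Finset.sum_congr rfl fun v hv => df_lo hu hv,
      Finset.sum_const, Finset.card_range, nsmul_eq_mul, Finset.mul_sum]
    exact Finset.sum_congr rfl fun v hv => by ring
  have hB4 : (∑ u ∈ verts (YI μ t), ∑ k ∈ Finset.range μ, ∑ v ∈ verts (YI μ t),
        ∑ j ∈ Finset.range μ, df μ (t+1) (leafv (YI μ t) u k) (leafv (YI μ t) v j))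
      = (∑ u ∈ verts (YI μ t), ∑ v ∈ verts (YI μ t),
          ((μ:ℝ)^2 * df μ t u v + 0 * df μ t u v + 2*(μ:ℝ)^2))
        - ((verts (YI μ t)).card : ℝ) * (2*(μ:ℝ)) := by
    have h4 : ∀ u ∈ verts (YI μ t), ∀ k ∈ Finset.range μ,
        (∑ v ∈ verts (YI μ t), ∑ j ∈ Finset.range μ,
          df μ (t+1) (leafv (YI μ t) u k) (leafv (YI μ t) v j))
        = (∑ v ∈ verts (YI μ t), ((μ:ℝ) * df μ t u v + 2*(μ:ℝ))) - 2 := by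
      intro u hu k hk
      rw [Finset.sum_congr rfl fun v hv =>
        Finset.sum_congr rfl fun j _ => df_ll (k := k) (j := j) hu hv]
      rw [Finset.sum_congr rfl fun v hv => Finset.sum_sub_distrib _ _, Finset.sum_sub_distrib,
        corr_sum hu hk]
      congr 1
      refine Finset.sum_congr rfl fun v hv => ?_
      rw [Finset.sum_const, Finset.card_range, nsmul_eq_mul]
      ring
    have h5 : ∀ u ∈ verts (YI μ t),
        (∑ _k ∈ Finset.range μ,
          ((∑ v ∈ verts (YI μ t), ((μ:ℝ) * df μ t u v + 2*(μ:ℝ))) - 2))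
        = (∑ v ∈ verts (YI μ t), ((μ:ℝ)^2 * df μ t u v + 0 * df μ t u v + 2*(μ:ℝ)^2))
            - 2*(μ:ℝ) := by
      intro u hu
      rw [Finset.sum_const, Finset.card_range, nsmul_eq_mul, mul_sub, Finset.mul_sum]
      congr 1
      · exact Finset.sum_congr rfl fun v hv => by ring
      · ring
    calc (∑ u ∈ verts (YI μ t), ∑ k ∈ Finset.range μ, ∑ v ∈ verts (YI μ t),
            ∑ j ∈ Finset.range μ, df μ (t+1) (leafv (YI μ t) u k) (leafv (YI μ t) v j))
        = ∑ u ∈ verts (YI μ t), ∑ _k ∈ Finset.range μ,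
            ((∑ v ∈ verts (YI μ t), ((μ:ℝ) * df μ t u v + 2*(μ:ℝ))) - 2) :=
          Finset.sum_congr rfl fun u hu => Finset.sum_congr rfl fun k hk => h4 u hu k hk
      _ = ∑ u ∈ verts (YI μ t),
            ((∑ v ∈ verts (YI μ t), ((μ:ℝ)^2 * df μ t u v + 0 * df μ t u v + 2*(μ:ℝ)^2))
              - 2*(μ:ℝ)) := Finset.sum_congr rfl h5
      _ = (∑ u ∈ verts (YI μ t), ∑ v ∈ verts (YI μ t),
            ((μ:ℝ)^2 * df μ t u v + 0 * df μ t u v + 2*(μ:ℝ)^2))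
          - ((verts (YI μ t)).card : ℝ) * (2*(μ:ℝ)) := by
          rw [Finset.sum_sub_distrib, Finset.sum_const, nsmul_eq_mul]
  rw [hB1, hB2, hB3, hB4, sum2_lin, sum2_lin, ih.hD, hn]
  unfold fT
  field_simp
  push_cast
  ring

end StepSums


section StepSums2

variable {μ t : ℕ}

lemma hMM_closed (ih : Inv μ t) : MM μ t = 2*(1+(μ:ℝ))^(t+1) - 1 := by
  have h := step_hecard ih
  have := congrArg (Nat.cast : ℕ → ℝ) h
  push_cast at this
  rw [MM]
  linarith

lemma step_hS (hμ : 1 ≤ μ) (ih : Inv μ t) :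
    (∑ u ∈ verts (YI μ (t+1)), ∑ v ∈ verts (YI μ (t+1)), Hf μ (t+1) u v)
      = (2*(1+(μ:ℝ))^(t+1) - 1) * (2*(1+(μ:ℝ))^(t+1)) * fT μ (t+1) := by
  have hp : (1+(μ:ℝ)) ≠ 0 := by positivity
  have hn : ((verts (YI μ t)).card : ℝ) = 2*(1+(μ:ℝ))^t := by
    rw [ih.hcard]; push_cast; ring
  have hMM := hMM_closed ih
  rw [YI_succ, expand_double]
  have hB1 : (∑ u ∈ verts (YI μ t), ∑ v ∈ verts (YI μ t), Hf μ (t+1) u v)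
      = ∑ u ∈ verts (YI μ t), ∑ v ∈ verts (YI μ t),
          ((1+(μ:ℝ)) * Hf μ t u v + (μ:ℝ) * df μ t u v + 0) := by
    refine Finset.sum_congr rfl fun u hu => Finset.sum_congr rfl fun v hv => ?_
    rw [Hf_oo hu hv]; ring
  have hB2 : (∑ u ∈ verts (YI μ t), ∑ v ∈ verts (YI μ t), ∑ j ∈ Finset.range μ,
        Hf μ (t+1) u (leafv (YI μ t) v j))
      = ∑ u ∈ verts (YI μ t), ∑ v ∈ verts (YI μ t),
          ((μ:ℝ)*(1+(μ:ℝ)) * Hf μ t u v + (μ:ℝ)^2 * df μ t u v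
            + (μ:ℝ)*(2*MM μ t - 1)) := by
    refine Finset.sum_congr rfl fun u hu => Finset.sum_congr rfl fun v hv => ?_
    rw [Finset.sum_congr rfl fun j _ => Hf_ol hu hv, Finset.sum_const, Finset.card_range,
      nsmul_eq_mul]
    ring
  have hB3 : (∑ u ∈ verts (YI μ t), ∑ k ∈ Finset.range μ, ∑ v ∈ verts (YI μ t),
        Hf μ (t+1) (leafv (YI μ t) u k) v)
      = ∑ u ∈ verts (YI μ t), ∑ v ∈ verts (YI μ t),
          ((μ:ℝ)*(1+(μ:ℝ)) * Hf μ t u v + (μ:ℝ)^2 * df μ t u v + (μ:ℝ)) := by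
    refine Finset.sum_congr rfl fun u hu => ?_
    rw [Finset.sum_congr rfl fun k _ => Finset.sum_congr rfl fun v hv => Hf_lo hu hv,
      Finset.sum_const, Finset.card_range, nsmul_eq_mul, Finset.mul_sum]
    exact Finset.sum_congr rfl fun v hv => by ring
  have hB4 : (∑ u ∈ verts (YI μ t), ∑ k ∈ Finset.range μ, ∑ v ∈ verts (YI μ t),
        ∑ j ∈ Finset.range μ, Hf μ (t+1) (leafv (YI μ t) u k) (leafv (YI μ t) v j))
      = (∑ u ∈ verts (YI μ t), ∑ v ∈ verts (YI μ t),
          ((μ:ℝ)^2*(1+(μ:ℝ)) * Hf μ t u v + (μ:ℝ)^3 * df μ t u v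
            + 2*MM μ t*(μ:ℝ)^2))
        - ((verts (YI μ t)).card : ℝ) * (2*MM μ t*(μ:ℝ)) := by
    have h4 : ∀ u ∈ verts (YI μ t), ∀ k ∈ Finset.range μ,
        (∑ v ∈ verts (YI μ t), ∑ j ∈ Finset.range μ,
          Hf μ (t+1) (leafv (YI μ t) u k) (leafv (YI μ t) v j))
        = (∑ v ∈ verts (YI μ t),
            ((μ:ℝ)*(1+(μ:ℝ)) * Hf μ t u v + (μ:ℝ)^2 * df μ t u v + 2*MM μ t*(μ:ℝ)))
          - 2*MM μ t := by
      intro u hu k hk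
      rw [Finset.sum_congr rfl fun v hv =>
        Finset.sum_congr rfl fun j _ => Hf_ll (k := k) (j := j) hu hv]
      rw [Finset.sum_congr rfl fun v hv => Finset.sum_sub_distrib _ _, Finset.sum_sub_distrib,
        corr_sum hu hk]
      congr 1
      refine Finset.sum_congr rfl fun v hv => ?_
      rw [Finset.sum_const, Finset.card_range, nsmul_eq_mul]
      ring
    have h5 : ∀ u ∈ verts (YI μ t),
        (∑ _k ∈ Finset.range μ,
          ((∑ v ∈ verts (YI μ t),
            ((μ:ℝ)*(1+(μ:ℝ)) * Hf μ t u v + (μ:ℝ)^2 * df μ t u v + 2*MM μ t*(μ:ℝ)))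
          - 2*MM μ t))
        = (∑ v ∈ verts (YI μ t),
            ((μ:ℝ)^2*(1+(μ:ℝ)) * Hf μ t u v + (μ:ℝ)^3 * df μ t u v + 2*MM μ t*(μ:ℝ)^2))
           - 2*MM μ t*(μ:ℝ) := by
      intro u hu
      rw [Finset.sum_const, Finset.card_range, nsmul_eq_mul, mul_sub, Finset.mul_sum]
      congr 1
      · exact Finset.sum_congr rfl fun v hv => by ring
      · ring
    calc (∑ u ∈ verts (YI μ t), ∑ k ∈ Finset.range μ, ∑ v ∈ verts (YI μ t),
            ∑ j ∈ Finset.range μ, Hf μ (t+1) (leafv (YI μ t) u k) (leafv (YI μ t) v j))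
        = ∑ u ∈ verts (YI μ t), ∑ _k ∈ Finset.range μ,
            ((∑ v ∈ verts (YI μ t),
              ((μ:ℝ)*(1+(μ:ℝ)) * Hf μ t u v + (μ:ℝ)^2 * df μ t u v + 2*MM μ t*(μ:ℝ)))
            - 2*MM μ t) :=
          Finset.sum_congr rfl fun u hu => Finset.sum_congr rfl fun k hk => h4 u hu k hk
      _ = ∑ u ∈ verts (YI μ t),
            ((∑ v ∈ verts (YI μ t),
              ((μ:ℝ)^2*(1+(μ:ℝ)) * Hf μ t u v + (μ:ℝ)^3 * df μ t u v + 2*MM μ t*(μ:ℝ)^2))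
             - 2*MM μ t*(μ:ℝ)) := Finset.sum_congr rfl h5
      _ = (∑ u ∈ verts (YI μ t), ∑ v ∈ verts (YI μ t),
            ((μ:ℝ)^2*(1+(μ:ℝ)) * Hf μ t u v + (μ:ℝ)^3 * df μ t u v + 2*MM μ t*(μ:ℝ)^2))
          - ((verts (YI μ t)).card : ℝ) * (2*MM μ t*(μ:ℝ)) := by
          rw [Finset.sum_sub_distrib, Finset.sum_const, nsmul_eq_mul]
  rw [hB1, hB2, hB3, hB4, sum2_lin, sum2_lin, sum2_lin, sum2_lin, ih.hS, ih.hD, hn, hMM]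
  unfold fT
  field_simp
  push_cast
  ring

lemma inv_succ (hμ : 1 ≤ μ) (ih : Inv μ t) : Inv μ (t+1) where
  hcard := step_hcard ih
  hecard := step_hecard ih
  hzero := step_hzero ih
  hHT := step_HT hμ ih
  hd1 := step_hd1 ih
  hdh := step_hdh hμ ih
  hret := step_hret hμ ih
  hconn := step_hconn ih
  hS := step_hS hμ ih
  hD := step_hD hμ ih

lemma inv_all (μ : ℕ) (hμ : 1 ≤ μ) (t : ℕ) : Inv μ t := by
  induction t with
  | zero => exact inv_zero μ hμ
  | succ t ih => exact inv_succ hμ ih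

end StepSums2


section Unique

lemma HT_unique {E : Finset (Sym2 ℕ)} {H1 H2 : ℕ → ℕ → ℝ}
    (hc : ∀ f : ℕ → ℝ, (∀ u v : ℕ, s(u,v) ∈ E → f u = f v) → ∀ x ∈ verts E, f x = f 0)
    (h1 : IsHT E H1) (h2 : IsHT E H2) :
    ∀ u ∈ verts E, ∀ v ∈ verts E, H1 u v = H2 u v := by
  intro u hu v hv
  set D : ℕ → ℝ := fun x => H1 x v - H2 x v with hD
  have hDv : D v = 0 := by simp [hD, h1.1 v hv, h2.1 v hv]
  -- harmonicity of the difference away from v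
  have hharm : ∀ x ∈ verts E, x ≠ v →
      (degE E x : ℝ) * D x = ∑ w ∈ verts E, if s(x,w) ∈ E then D w else 0 := by
    intro x hx hxv
    have e1 := h1.2 x hx v hv hxv
    have e2 := h2.2 x hx v hv hxv
    have e3 : (∑ w ∈ verts E, if s(x,w) ∈ E then D w else 0)
        = (∑ w ∈ verts E, if s(x,w) ∈ E then H1 w v else 0)
          - (∑ w ∈ verts E, if s(x,w) ∈ E then H2 w v else 0) := by
      rw [← Finset.sum_sub_distrib]
      refine Finset.sum_congr rfl fun w _ => ?_
      split <;> simp [hD]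
    rw [e3]
    have : (degE E x : ℝ) * D x = (degE E x : ℝ) * H1 x v - (degE E x : ℝ) * H2 x v := by
      simp [hD]; ring
    rw [this, e1, e2]
    ring
  -- key: for every x (including v), D x * (deg x * D x) = D x * (sum over nbrs)
  have hkey : ∀ x ∈ verts E,
      D x * ((degE E x : ℝ) * D x)
        = D x * (∑ w ∈ verts E, if s(x,w) ∈ E then D w else 0) := by
    intro x hx
    by_cases hxv : x = v
    · subst hxv; rw [hDv]; ring
    · rw [hharm x hx hxv]
  -- energy: total sum of squared edge differences is zero
  have expand : ∀ x ∈ verts E,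
      (∑ w ∈ verts E, if s(x,w) ∈ E then (D x - D w)^2 else 0)
        = (degE E x : ℝ) * D x^2
          + (∑ w ∈ verts E, if s(x,w) ∈ E then D w^2 else 0)
          - 2 * (D x * ∑ w ∈ verts E, if s(x,w) ∈ E then D w else 0) := by
    intro x hx
    have hpt : ∀ w, (if s(x,w) ∈ E then (D x - D w)^2 else 0)
        = D x^2 * (if s(x,w) ∈ E then (1:ℝ) else 0)
          + (if s(x,w) ∈ E then D w^2 else 0)
          - 2 * (D x * (if s(x,w) ∈ E then D w else 0)) := fun w => by
      split <;> ring
    rw [Finset.sum_congr rfl fun w _ => hpt w, Finset.sum_sub_distrib,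
      Finset.sum_add_distrib, ← Finset.mul_sum, ← Finset.mul_sum, ← Finset.mul_sum,
      sum_ite_one_eq_deg]
    ring
  have p1 : (∑ x ∈ verts E, ∑ w ∈ verts E, if s(x,w) ∈ E then D w^2 else 0)
      = ∑ x ∈ verts E, (degE E x : ℝ) * D x^2 := by
    rw [Finset.sum_comm]
    refine Finset.sum_congr rfl fun w hw => ?_
    have hpt : ∀ x, (if s(x,w) ∈ E then D w^2 else 0)
        = D w^2 * (if s(w,x) ∈ E then (1:ℝ) else 0) := fun x => by
      rw [Sym2.eq_swap]
      split <;> ring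
    rw [Finset.sum_congr rfl fun x _ => hpt x, ← Finset.mul_sum, sum_ite_one_eq_deg]
    ring
  have Tzero : (∑ x ∈ verts E, ∑ w ∈ verts E, if s(x,w) ∈ E then (D x - D w)^2 else 0)
      = 0 := by
    rw [Finset.sum_congr rfl expand, Finset.sum_sub_distrib, Finset.sum_add_distrib, p1]
    have p2 : (∑ x ∈ verts E,
        2 * (D x * ∑ w ∈ verts E, if s(x,w) ∈ E then D w else 0))
        = ∑ x ∈ verts E, 2 * ((degE E x : ℝ) * D x^2) := by
      refine Finset.sum_congr rfl fun x hx => ?_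
      rw [← hkey x hx]
      ring
    rw [p2]
    rw [← Finset.sum_add_distrib, ← Finset.sum_sub_distrib]
    refine Finset.sum_eq_zero fun x hx => ?_
    ring
  have hedge : ∀ a b : ℕ, s(a,b) ∈ E → D a = D b := by
    intro a b hab
    have ha := mem_verts_left hab
    have hb := mem_verts_right hab
    have hnn1 : ∀ x ∈ verts E,
        0 ≤ ∑ w ∈ verts E, if s(x,w) ∈ E then (D x - D w)^2 else 0 := fun x _ =>
      Finset.sum_nonneg fun w _ => by split <;> positivity
    have hx0 := (Finset.sum_eq_zero_iff_of_nonneg hnn1).1 Tzero a ha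
    have hnn2 : ∀ w ∈ verts E, 0 ≤ if s(a,w) ∈ E then (D a - D w)^2 else 0 := fun w _ => by
      split <;> positivity
    have hw0 := (Finset.sum_eq_zero_iff_of_nonneg hnn2).1 hx0 b hb
    rw [if_pos hab] at hw0
    have := pow_eq_zero_iff (n := 2) (by norm_num) |>.1 hw0
    linarith [sub_eq_zero.1 this]
  have hu0 := hc D hedge u hu
  have hv0 := hc D hedge v hv
  have : D u = 0 := by rw [hu0, ← hv0, hDv]
  have := sub_eq_zero.1 this
  exact this

end Unique

end MFPT

set_option maxHeartbeats 1000000 in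
/-- The mean first-passage time of the simple random walk on `Y_I(t)` equals
`(4μt + μ − 1)(1 + μ)^{t−1} + 2/(1 + μ)`. -/
theorem mfpt_YI (μ : ℕ) (hμ : 1 ≤ μ) (t : ℕ)
    (H : ℕ → ℕ → ℝ) (hH : IsHT (YI μ t) H) :
    (∑ u ∈ verts (YI μ t), ∑ v ∈ verts (YI μ t), H u v) /
        (((verts (YI μ t)).card : ℝ) * (((verts (YI μ t)).card : ℝ) - 1))
      = (4 * (μ : ℝ) * t + μ - 1) * ((1 : ℝ) + μ) ^ ((t : ℤ) - 1)
          + 2 / (1 + (μ : ℝ)) := by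
  have inv := MFPT.inv_all μ hμ t
  have hp : (0:ℝ) < 1 + (μ:ℝ) := by positivity
  have hsum : (∑ u ∈ verts (YI μ t), ∑ v ∈ verts (YI μ t), H u v)
      = ∑ u ∈ verts (YI μ t), ∑ v ∈ verts (YI μ t), MFPT.Hf μ t u v :=
    Finset.sum_congr rfl fun u hu => Finset.sum_congr rfl fun v hv =>
      MFPT.HT_unique inv.hconn hH inv.hHT u hu v hv
  rw [hsum, inv.hS, inv.hcard]
  have hcast : ((2*(1+μ)^t : ℕ) : ℝ) = 2*(1+(μ:ℝ))^t := by push_cast; ring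
  rw [hcast]
  have h1le : (1:ℝ) ≤ (1+(μ:ℝ))^t := one_le_pow₀ (by linarith)
  have nB : (2*(1+(μ:ℝ))^t) ≠ 0 := by positivity
  have nB1 : (2*(1+(μ:ℝ))^t - 1) ≠ 0 := by linarith
  have hz : (1+(μ:ℝ)) ^ ((t:ℤ) - 1) = (1+(μ:ℝ))^t / (1+(μ:ℝ)) := by
    rw [zpow_sub₀ (ne_of_gt hp), zpow_natCast, zpow_one]
  rw [hz]
  unfold MFPT.fT
  field_simp
end
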